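/- Let μ be a positive real number and a, b positive integers with a > μb. The probability P that a random ordering of a votes for A and b votes for B satisfies a_r > μ·b_r for all r is at least (a - ⌊μb⌋)/(a + b). -/

import Mathlib

/-- Number of A-votes (true) among the first `r` positions. -/
def countA (n : ℕ) (v : Fin n → Bool) (r : ℕ) : ℕ :=
  (Finset.univ.filter (fun i : Fin n => i.val < r ∧ v i = true)).card

/-- Number of B-votes (false) among the first `r` positions. -/
def countB (n : ℕ) (v : Fin n → Bool) (r : ℕ) : ℕ :=
  (Finset.univ.filter (fun i : Fin n => i.val < r ∧ v i = false)).card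

open Finset

section Cycle

variable {S : ℕ → ℝ} {n : ℕ} {d : ℝ}

/-- growth along periods -/
lemma cyc_growth (hper : ∀ m, S (m + n) = S m + d) :
    ∀ k m, S (m + k * n) = S m + k * d := by
  intro k
  induction k with
  | zero => simp
  | succ k ih =>
    intro m
    have h : m + (k + 1) * n = (m + k * n) + n := by ring
    rw [h, hper, ih]
    push_cast
    ring

/-- S tends to infinity -/
lemma cyc_tendsto (hn : 0 < n) (hd : 0 < d) (hper : ∀ m, S (m + n) = S m + d) :
    ∀ C : ℝ, ∃ N : ℕ, ∀ m, N ≤ m → C < S m := by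
  intro C
  have hne : (Finset.range n).Nonempty := Finset.nonempty_range_iff.mpr hn.ne'
  set c : ℝ := (Finset.range n).inf' hne S with hc
  obtain ⟨K, hK⟩ := exists_nat_gt ((C - c) / d)
  refine ⟨K * n, fun m hm => ?_⟩
  have h1 : S m = S (m % n) + (m / n : ℕ) * d := by
    have := cyc_growth hper (m / n) (m % n)
    rwa [Nat.mod_add_div'] at this
  have h2 : c ≤ S (m % n) := Finset.inf'_le S (Finset.mem_range.mpr (Nat.mod_lt m hn))
  have h3 : (K : ℕ) ≤ m / n := Nat.le_div_iff_mul_le hn |>.mpr hm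
  have h4 : (K : ℝ) * d ≤ (m / n : ℕ) * d := by
    apply mul_le_mul_of_nonneg_right _ hd.le
    exact_mod_cast h3
  have h5 : C - c < K * d := (div_lt_iff₀ hd).mp hK
  rw [h1]
  nlinarith
/-- existence of a ladder point at or after any j0, with value ≤ S j0 -/
lemma cyc_ladder (hn : 0 < n) (hd : 0 < d) (hper : ∀ m, S (m + n) = S m + d) (j0 : ℕ) :
    ∃ j, j0 ≤ j ∧ S j ≤ S j0 ∧ ∀ m, j < m → S j < S m := by
  obtain ⟨N, hN⟩ := cyc_tendsto hn hd hper (S j0)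
  have hj0N : j0 < N := by
    by_contra h
    exact lt_irrefl _ (hN j0 (le_of_not_gt h))
  set T : Finset ℕ := (Finset.range N).filter (fun m => j0 ≤ m ∧ S m ≤ S j0) with hT
  have hTne : T.Nonempty := ⟨j0, by simp [hT, hj0N]⟩
  set j := T.max' hTne with hj
  have hjmem := T.max'_mem hTne
  simp only [hT, Finset.mem_filter, Finset.mem_range] at hjmem
  refine ⟨j, hjmem.2.1, hjmem.2.2, fun m hm => ?_⟩
  rcases le_or_gt N m with h | h
  · exact lt_of_le_of_lt hjmem.2.2 (hN m h)
  · -- m < N and m > j so m ∉ T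
    have hmT : m ∉ T := fun hmem => absurd (T.le_max' m hmem) (not_le.mpr hm)
    simp only [hT, Finset.mem_filter, Finset.mem_range] at hmT
    push_neg at hmT
    exact lt_of_le_of_lt hjmem.2.2 (hmT h (le_trans hjmem.2.1 (le_of_lt hm)))

/-- chain of ladder points -/
lemma cyc_chain (hn : 0 < n) (hd : 0 < d) (hper : ∀ m, S (m + n) = S m + d)
    (hstep : ∀ m, S (m + 1) ≤ S m + 1) (j0 : ℕ) (hj0 : ∀ m, j0 < m → S j0 < S m) :
    ∀ t : ℕ, ∃ F : Finset ℕ, F.card = t + 1 ∧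
      (∀ j ∈ F, (j0 ≤ j ∧ ∀ m, j < m → S j < S m)) ∧
      ∃ jm ∈ F, (∀ j ∈ F, j ≤ jm) ∧ S jm ≤ S j0 + t := by
  intro t
  induction t with
  | zero =>
    refine ⟨{j0}, by simp, ?_, j0, by simp, by simp, by simp⟩
    intro j hj
    rw [Finset.mem_singleton] at hj
    subst hj
    exact ⟨le_refl _, hj0⟩
  | succ t ih =>
    obtain ⟨F, hcard, hall, jm, hjmF, hjmax, hjval⟩ := ih
    obtain ⟨j', hj'ge, hj'val, hj'lad⟩ := cyc_ladder hn hd hper (jm + 1)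
    have hj'gt : jm < j' := lt_of_lt_of_le (Nat.lt_succ_self jm) hj'ge
    have hj'new : j' ∉ F := fun h => absurd (hjmax j' h) (not_le.mpr hj'gt)
    refine ⟨insert j' F, ?_, ?_, j', Finset.mem_insert_self _ _, ?_, ?_⟩
    · rw [Finset.card_insert_of_notMem hj'new, hcard]
    · intro j hj
      rcases Finset.mem_insert.mp hj with h | h
      · subst h
        exact ⟨le_trans (hall jm hjmF).1 hj'gt.le, hj'lad⟩
      · exact hall j h
    · intro j hj
      rcases Finset.mem_insert.mp hj with h | h
      · subst h; exact le_refl _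
      · exact le_trans (hjmax j h) hj'gt.le
    · calc S j' ≤ S (jm + 1) := hj'val
        _ ≤ S jm + 1 := hstep jm
        _ ≤ S j0 + t + 1 := by linarith
        _ = S j0 + (t + 1 : ℕ) := by push_cast; ring

/-- downward periodicity of ladder property -/
lemma cyc_ladder_down (hper : ∀ m, S (m + n) = S m + d) (j : ℕ)
    (h : ∀ m, j + n < m → S (j + n) < S m) : ∀ m, j < m → S j < S m := by
  intro m hm
  have h2 : j + n < m + n := by omega
  have := h (m + n) h2
  rw [hper, hper] at this
  linarith

open Classical in
/-- the cycle lemma -/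
theorem cycle_lemma (hn : 0 < n) (hd : 0 < d) (hper : ∀ m, S (m + n) = S m + d)
    (hstep : ∀ m, S (m + 1) ≤ S m + 1) :
    (⌈d⌉.toNat : ℕ) ≤ ((Finset.range n).filter (fun j => ∀ m, j < m → S j < S m)).card := by
  classical
  obtain ⟨j0, _, _, hj0⟩ := cyc_ladder hn hd hper 0
  set K : ℕ := ⌈d⌉.toNat with hK
  have hK1 : 1 ≤ K := by
    have : (1 : ℤ) ≤ ⌈d⌉ := Int.ceil_pos.mpr hd
    omega
  obtain ⟨F, hcard, hall, jm, hjmF, hjmax, hjval⟩ :=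
    cyc_chain hn hd hper hstep j0 hj0 (K - 1)
  have hcard' : F.card = K := by omega
  -- value bound for all elements
  have hvb : ∀ j ∈ F, S j ≤ S j0 + (K - 1 : ℕ) := by
    intro j hj
    rcases eq_or_lt_of_le (hjmax j hj) with h | h
    · rw [h]; exact hjval
    · exact le_of_lt (lt_of_lt_of_le ((hall j hj).2 jm h) hjval)
  have hKZ : (K : ℤ) = ⌈d⌉ := Int.toNat_of_nonneg (le_of_lt (Int.ceil_pos.mpr hd))
  have hKd : ((K : ℝ) - 1) < d := by
    have h1 : (⌈d⌉ : ℝ) < d + 1 := Int.ceil_lt_add_one d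
    have h2 : ((K : ℝ)) = ((⌈d⌉ : ℤ) : ℝ) := by exact_mod_cast hKZ
    rw [h2]
    linarith
  -- all elements are < j0 + n
  have hlt : ∀ j ∈ F, j < j0 + n := by
    intro j hj
    by_contra h
    push_neg at h
    have hlad : ∀ m, j0 + n < m → S (j0 + n) < S m := by
      intro m hm
      have h2 : m = (m - n) + n := by omega
      have h3 : j0 < m - n := by omega
      rw [h2, hper, hper]
      linarith [hj0 (m - n) h3]
    have hSjn : S (j0 + n) = S j0 + d := hper j0
    have hbnd := hvb j hj
    have hKd' : S j0 + ((K : ℝ) - 1) < S (j0 + n) := by rw [hSjn]; linarith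
    rcases eq_or_lt_of_le h with h4 | h4
    · rw [← h4] at hbnd
      have : ((K - 1 : ℕ) : ℝ) = (K : ℝ) - 1 := by
        have := hK1; push_cast [Nat.cast_sub hK1]; ring
      rw [this] at hbnd
      linarith
    · have := hlad j h4
      have hc : ((K - 1 : ℕ) : ℝ) = (K : ℝ) - 1 := by
        push_cast [Nat.cast_sub hK1]; ring
      rw [hc] at hbnd
      linarith
  -- map F into range n via mod
  have hge : ∀ j ∈ F, j0 ≤ j := fun j hj => (hall j hj).1
  have hinj : Set.InjOn (· % n) F := by
    intro x hx y hy hxy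
    have hx1 := hge x hx; have hx2 := hlt x hx
    have hy1 := hge y hy; have hy2 := hlt y hy
    simp only at hxy
    have hmod : x ≡ y [MOD n] := hxy
    rcases le_total x y with h | h
    · have hdvd : n ∣ y - x := (Nat.modEq_iff_dvd' h).mp hmod
      rcases Nat.eq_zero_or_pos (y - x) with h0 | h0
      · omega
      · have := Nat.le_of_dvd h0 hdvd
        omega
    · have hdvd : n ∣ x - y := (Nat.modEq_iff_dvd' h).mp hmod.symm
      rcases Nat.eq_zero_or_pos (x - y) with h0 | h0
      · omega
      · have := Nat.le_of_dvd h0 hdvd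
        omega
  have himage : F.image (· % n) ⊆ (Finset.range n).filter (fun j => ∀ m, j < m → S j < S m) := by
    intro x hx
    obtain ⟨j, hjF, hjx⟩ := Finset.mem_image.mp hx
    subst hjx
    refine Finset.mem_filter.mpr ⟨Finset.mem_range.mpr (Nat.mod_lt j hn), ?_⟩
    -- j % n is a ladder point since j = j % n + (j/n) * n is
    have hlad : ∀ m, j < m → S j < S m := (hall j hjF).2
    have : ∀ k, (∀ m, (j % n + k * n) < m → S (j % n + k * n) < S m) →
        (∀ m, j % n < m → S (j % n) < S m) := by
      intro k
      induction k with
      | zero => simp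
      | succ k ih =>
        intro h
        apply ih
        have : j % n + (k + 1) * n = (j % n + k * n) + n := by ring
        rw [this] at h
        exact cyc_ladder_down hper _ h
    apply this (j / n)
    have hj : j % n + (j / n) * n = j := Nat.mod_add_div' j n
    rw [hj]
    exact hlad
  calc K = F.card := hcard'.symm
    _ = (F.image (· % n)).card := (Finset.card_image_of_injOn hinj).symm
    _ ≤ _ := Finset.card_le_card himage

end Cycle

open Finset

section Ballot

variable {n : ℕ}

noncomputable def wt (μ : ℝ) (x : Bool) : ℝ := if x then 1 else -μ

def extv (hn : 0 < n) (v : Fin n → Bool) (i : ℕ) : Bool := v ⟨i % n, Nat.mod_lt i hn⟩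

noncomputable def Ssum (μ : ℝ) (f : ℕ → Bool) (m : ℕ) : ℝ :=
  ∑ i ∈ Finset.range m, wt μ (f i)

lemma Ssum_succ (μ : ℝ) (f : ℕ → Bool) (m : ℕ) :
    Ssum μ f (m + 1) = Ssum μ f m + wt μ (f m) := Finset.sum_range_succ _ _

lemma wt_le_one (μ : ℝ) (hμ : 0 < μ) (x : Bool) : wt μ x ≤ 1 := by
  cases x <;> simp [wt] <;> linarith

lemma extv_val (hn : 0 < n) (v : Fin n → Bool) (i : Fin n) : extv hn v i.val = v i := by
  simp [extv, Nat.mod_eq_of_lt i.isLt]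

lemma extv_period (hn : 0 < n) (v : Fin n → Bool) (i : ℕ) :
    extv hn v (i + n) = extv hn v i := by
  simp [extv, Nat.add_mod_right]

lemma Ssum_add_period (μ : ℝ) (f : ℕ → Bool) (hf : ∀ i, f (i + n) = f i) (m : ℕ) :
    Ssum μ f (m + n) = Ssum μ f m + Ssum μ f n := by
  induction m with
  | zero => simp [Ssum]
  | succ m ih =>
    have h : m + 1 + n = (m + n) + 1 := by ring
    rw [h, Ssum_succ, ih, hf, Ssum_succ]
    ring

lemma count_sub (μ : ℝ) (hn : 0 < n) (v : Fin n → Bool) (r : ℕ) (hr : r ≤ n) :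
    (countA n v r : ℝ) - μ * (countB n v r : ℝ) = Ssum μ (extv hn v) r := by
  classical
  have hA : (countA n v r : ℝ)
      = ∑ i : Fin n, (if (i.val < r ∧ extv hn v i.val = true) then (1:ℝ) else 0) := by
    rw [countA, Finset.card_filter]
    push_cast
    exact Finset.sum_congr rfl fun i _ => by rw [extv_val hn v i]
  have hB : (countB n v r : ℝ)
      = ∑ i : Fin n, (if (i.val < r ∧ extv hn v i.val = false) then (1:ℝ) else 0) := by
    rw [countB, Finset.card_filter]
    push_cast
    exact Finset.sum_congr rfl fun i _ => by rw [extv_val hn v i]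
  rw [hA, hB, Finset.mul_sum, ← Finset.sum_sub_distrib]
  rw [Fin.sum_univ_eq_sum_range (fun m =>
    (if (m < r ∧ extv hn v m = true) then (1:ℝ) else 0)
      - μ * (if (m < r ∧ extv hn v m = false) then (1:ℝ) else 0)) n]
  rw [Ssum,
    ← Finset.sum_subset (Finset.range_subset_range.mpr hr)
      (fun m _ hm => by
        have h : ¬ m < r := fun h => hm (Finset.mem_range.mpr h)
        simp [h])]
  exact Finset.sum_congr rfl fun m hm => by
    have h : m < r := Finset.mem_range.mp hm
    cases h2 : extv hn v m <;> simp [wt, h, h2]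

lemma countA_add_countB (v : Fin n → Bool) : countA n v n + countB n v n = n := by
  classical
  rw [countA, countB]
  have h1 : (univ.filter fun i : Fin n => i.val < n ∧ v i = true)
      = univ.filter (fun i : Fin n => v i = true) := by
    apply Finset.filter_congr
    intro i _
    simp [i.isLt]
  have h2 : (univ.filter fun i : Fin n => i.val < n ∧ v i = false)
      = univ.filter (fun i : Fin n => ¬ (v i = true)) := by
    apply Finset.filter_congr
    intro i _
    simp [i.isLt]
  rw [h1, h2, Finset.card_filter_add_card_filter_not]
  simp

/-- rotation of a vote sequence -/
def rot (v : Fin n → Bool) (j : Fin n) : Fin n → Bool := fun i => v (i + j)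

lemma rot_rot (hn : 0 < n) (v : Fin n → Bool) (j k : Fin n) :
    rot (rot v j) k = rot v (k + j) := by
  haveI : NeZero n := ⟨hn.ne'⟩
  funext i
  simp [rot, add_assoc]

lemma rot_zero [NeZero n] (v : Fin n → Bool) : rot v (0 : Fin n) = v := by
  funext i
  simp [rot]

lemma extv_rot (hn : 0 < n) (v : Fin n → Bool) (j : Fin n) (i : ℕ) :
    extv hn (rot v j) i = extv hn v (i + j.val) := by
  simp only [extv, rot]
  congr 1
  ext
  simp [Fin.val_add, Nat.mod_add_mod]

lemma Ssum_rot (μ : ℝ) (hn : 0 < n) (v : Fin n → Bool) (j : Fin n) (r : ℕ) :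
    Ssum μ (extv hn (rot v j)) r
      = Ssum μ (extv hn v) (j.val + r) - Ssum μ (extv hn v) j.val := by
  induction r with
  | zero => simp [Ssum]
  | succ r ih =>
    have h : j.val + (r + 1) = (j.val + r) + 1 := by ring
    rw [Ssum_succ, ih, h, Ssum_succ, extv_rot]
    have h2 : r + j.val = j.val + r := by ring
    rw [h2]
    ring

lemma countA_rot (hn : 0 < n) (v : Fin n → Bool) (j : Fin n) :
    countA n (rot v j) n = countA n v n := by
  classical
  haveI : NeZero n := ⟨hn.ne'⟩
  rw [countA, countA]
  apply Finset.card_bij' (fun i _ => i + j) (fun i _ => i - j)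
  · intro i hi
    simp only [Finset.mem_filter, Finset.mem_univ, true_and] at hi ⊢
    exact ⟨(i + j).isLt, hi.2⟩
  · intro i hi
    simp only [Finset.mem_filter, Finset.mem_univ, true_and] at hi ⊢
    refine ⟨(i - j).isLt, ?_⟩
    show v (i - j + j) = true
    rw [sub_add_cancel]
    exact hi.2
  · intro i _
    exact add_sub_cancel_right i j
  · intro i _
    exact sub_add_cancel i j

end Ballot
private lemma filterInst {α : Type*} {s : Finset α} {p : α → Prop} (h1 h2 : DecidablePred p) :
    @Finset.filter α p h1 s = @Finset.filter α p h2 s := by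
  cases Subsingleton.elim h1 h2
  rfl

open Classical in
lemma per_vote (μ : ℝ) (hμ : 0 < μ) (a b : ℕ) (hb : 0 < b) (hd : 0 < (a:ℝ) - μ * b)
    (v : Fin (a + b) → Bool) (hv : countA (a + b) v (a + b) = a) :
    (⌈(a:ℝ) - μ * b⌉.toNat : ℕ) ≤ (Finset.univ.filter (fun j : Fin (a + b) =>
      countA (a + b) (rot v j) (a + b) = a ∧
      ∀ r, 1 ≤ r → r ≤ a + b →
        μ * (countB (a + b) (rot v j) r : ℝ) < (countA (a + b) (rot v j) r : ℝ))).card := by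
  have hn : 0 < a + b := by omega
  set S : ℕ → ℝ := Ssum μ (extv hn v) with hS
  have hcb : countB (a + b) v (a + b) = b := by
    have h := countA_add_countB v
    omega
  have hSn : S (a + b) = (a : ℝ) - μ * b := by
    have h := count_sub μ hn v (a + b) le_rfl
    rw [hv, hcb] at h
    rw [hS, ← h]
  have hper : ∀ m, S (m + (a + b)) = S m + ((a : ℝ) - μ * b) := by
    intro m
    rw [hS, Ssum_add_period μ _ (extv_period hn v) m, ← hS, hSn]
  have hstep : ∀ m, S (m + 1) ≤ S m + 1 := by
    intro m
    rw [hS, Ssum_succ]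
    have := wt_le_one μ hμ (extv hn v m)
    rw [← hS]
    linarith
  have hcyc := cycle_lemma hn hd hper hstep
  refine le_trans hcyc (Finset.card_le_card_of_injOn
    (fun m => (⟨m % (a + b), Nat.mod_lt m hn⟩ : Fin (a + b))) ?_ ?_)
  · intro m hm
    rw [Finset.mem_coe, Finset.mem_filter, Finset.mem_range] at hm
    obtain ⟨hmn, hP⟩ := hm
    set j : Fin (a + b) := ⟨m % (a + b), Nat.mod_lt m hn⟩ with hj
    have hjval : j.val = m := Nat.mod_eq_of_lt hmn
    simp only [Finset.mem_coe, Finset.mem_filter, Finset.mem_univ, true_and]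
    constructor
    · rw [countA_rot hn v j, hv]
    · intro r hr1 hr2
      have h := count_sub μ hn (rot v j) r hr2
      rw [Ssum_rot μ hn v j r, hjval, ← hS] at h
      have hgt : S m < S (m + r) := hP (m + r) (by omega)
      linarith
  · intro m1 hm1 m2 hm2 heq
    rw [Finset.coe_filter, Set.mem_setOf_eq] at hm1 hm2
    have h1 : m1 < a + b := Finset.mem_range.mp hm1.1
    have h2 : m2 < a + b := Finset.mem_range.mp hm2.1
    have := congrArg Fin.val heq
    simpa [Nat.mod_eq_of_lt h1, Nat.mod_eq_of_lt h2] using this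

open Classical in
lemma count_key {n : ℕ} (hn : 0 < n) (P Q : (Fin n → Bool) → Prop) (K : ℕ)
    (hPQ : ∀ (v : Fin n → Bool) (j : Fin n), P (rot v j) → Q v)
    (hK : ∀ v, Q v → K ≤ (Finset.univ.filter (fun j : Fin n => P (rot v j))).card) :
    K * (Finset.univ.filter Q).card ≤ n * (Finset.univ.filter P).card := by
  haveI : NeZero n := ⟨hn.ne'⟩
  set r : (Fin n → Bool) → Fin n → Prop := fun v j => P (rot v j) with hr
  have hm : ∀ v ∈ Finset.univ.filter Q, K ≤ ((Finset.univ : Finset (Fin n)).bipartiteAbove r v).card := by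
    intro v hv
    rw [Finset.mem_filter] at hv
    have h := hK v hv.2
    have he : (Finset.univ : Finset (Fin n)).bipartiteAbove r v
        = Finset.univ.filter (fun j : Fin n => P (rot v j)) := by
      ext j
      simp [Finset.bipartiteAbove, hr]
    rw [he]
    exact h
  have hb : ∀ j ∈ (Finset.univ : Finset (Fin n)),
      ((Finset.univ.filter Q).bipartiteBelow r j).card ≤ (Finset.univ.filter P).card := by
    intro j _
    have he : (Finset.univ.filter Q).bipartiteBelow r j
        = Finset.univ.filter (fun v => P (rot v j)) := by
      ext w
      simp only [Finset.bipartiteBelow, Finset.mem_filter, Finset.mem_univ, true_and, hr]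
      constructor
      · rintro ⟨_, h⟩; exact h
      · intro h; exact ⟨hPQ w j h, h⟩
    rw [he]
    apply le_of_eq
    apply Finset.card_bij' (fun v _ => rot v j) (fun w _ => rot w (-j))
    · intro v hv
      rw [Finset.mem_filter] at hv ⊢
      exact ⟨Finset.mem_univ _, hv.2⟩
    · intro w hw
      rw [Finset.mem_filter] at hw ⊢
      refine ⟨Finset.mem_univ _, ?_⟩
      rw [rot_rot hn w (-j) j, add_neg_cancel, rot_zero]
      exact hw.2
    · intro v _
      rw [rot_rot hn v j (-j), neg_add_cancel, rot_zero]
    · intro w _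
      rw [rot_rot hn w (-j) j, add_neg_cancel, rot_zero]
  have := Finset.card_nsmul_le_card_nsmul r hm hb
  rw [Finset.card_univ, Fintype.card_fin] at this
  rw [smul_eq_mul, smul_eq_mul] at this
  calc K * (Finset.univ.filter Q).card = (Finset.univ.filter Q).card * K := mul_comm _ _
    _ ≤ n * (Finset.univ.filter P).card := this

open Classical in
theorem ballot_strict_lower_bound (μ : ℝ) (a b : ℕ) (hμ : 0 < μ) (ha : 0 < a) (hb : 0 < b)
    (hab : μ * b < a) :
    ((a : ℝ) - (⌊μ * (b : ℝ)⌋ : ℝ)) / ((a : ℝ) + b)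
      ≤ (((Finset.univ.filter (fun v : Fin (a + b) → Bool =>
        countA (a + b) v (a + b) = a ∧
        ∀ r, 1 ≤ r → r ≤ a + b →
          μ * (countB (a + b) v r : ℝ) < (countA (a + b) v r : ℝ))).card : ℝ) /
      ((Finset.univ.filter (fun v : Fin (a + b) → Bool =>
        countA (a + b) v (a + b) = a)).card : ℝ)) := by
  have hn : 0 < a + b := by omega
  have hd : 0 < (a : ℝ) - μ * b := by linarith
  set K : ℕ := ⌈(a:ℝ) - μ * b⌉.toNat with hK
  set G := Finset.univ.filter (fun v : Fin (a + b) → Bool =>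
        countA (a + b) v (a + b) = a ∧
        ∀ r, 1 ≤ r → r ≤ a + b →
          μ * (countB (a + b) v r : ℝ) < (countA (a + b) v r : ℝ)) with hG
  set Ω := Finset.univ.filter (fun v : Fin (a + b) → Bool =>
        countA (a + b) v (a + b) = a) with hΩ
  have hineq : K * Ω.card ≤ (a + b) * G.card := by
    have key := count_key hn
      (fun v : Fin (a + b) → Bool =>
        countA (a + b) v (a + b) = a ∧
        ∀ r, 1 ≤ r → r ≤ a + b →
          μ * (countB (a + b) v r : ℝ) < (countA (a + b) v r : ℝ))
      (fun v : Fin (a + b) → Bool => countA (a + b) v (a + b) = a) K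
      (fun v j h => by
        have h1 := h.1
        rw [countA_rot hn v j] at h1
        exact h1)
      (fun v hv => by
        have h := per_vote μ hμ a b hb hd v hv
        convert h using 2
        exact filterInst _ _)
    rw [hG, hΩ]
    convert key using 3 <;> exact filterInst _ _
  -- Ω is nonempty
  have hΩpos : 0 < Ω.card := by
    refine Finset.card_pos.mpr ⟨fun i : Fin (a+b) => decide (i.val < a), ?_⟩
    rw [hΩ, Finset.mem_filter]
    refine ⟨Finset.mem_univ _, ?_⟩
    rw [countA]
    have hle : ∀ m ∈ Finset.range a, m < a + b := fun m hm => by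
      have := Finset.mem_range.mp hm; omega
    have heq : (Finset.univ.filter (fun i : Fin (a+b) =>
        i.val < a + b ∧ decide (i.val < a) = true))
        = (Finset.range a).attachFin hle := by
      ext i
      simp [Finset.mem_attachFin, i.isLt]
    rw [heq, Finset.card_attachFin, Finset.card_range]
  -- cast to the reals
  have hKZ : (K : ℤ) = (a : ℤ) - ⌊μ * b⌋ := by
    rw [hK, Int.toNat_of_nonneg (le_of_lt (Int.ceil_pos.mpr hd))]
    have h1 : (a : ℝ) - μ * b = -(μ * b - (a : ℕ)) := by ring
    rw [h1, Int.ceil_neg, Int.floor_sub_natCast]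
    ring
  have hKR : (K : ℝ) = (a : ℝ) - (⌊μ * b⌋ : ℝ) := by
    have := congrArg (fun z : ℤ => (z : ℝ)) hKZ
    push_cast at this
    exact this
  have hab' : (0:ℝ) < (a:ℝ) + b := by positivity
  have hΩR : (0:ℝ) < (Ω.card : ℝ) := by exact_mod_cast hΩpos
  rw [div_le_div_iff₀ hab' hΩR]
  have hcast : (K : ℝ) * Ω.card ≤ ((a + b : ℕ) : ℝ) * G.card := by exact_mod_cast hineq
  rw [hKR] at hcast
  push_cast at hcast ⊢
  nlinarith [hcast]
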